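/- Let r ≥ 1, n ≥ 1, let λ_1,…,λ_{rn} be real numbers, and let X be an r×(rn) random matrix whose entries are independent standard complex Gaussian random variables, i.e., each entry equals g + i·h where g and h are independent real Gaussians with mean 0 and variance 1/2 (so E|X_{m,a}|² = 1), all entries independent. Then E[ |det M(λ,X)|² ] = Σ_{(A_1,…,A_r) ∈ 𝒫_{r,n}} ∏_{j=1}^r Δ(A_j)². -/

import Mathlib

open scoped BigOperators
open MeasureTheory ProbabilityTheory

/-- `M(λ,X)` for a complex `r × rn` matrix `X`: the `(rn)×(rn)` complex matrix with
`(i,j)` entry `λ_i^{⌊(j−1)/r⌋} · X_{j − r⌊(j−1)/r⌋, i}` (written 0-based). -/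
def MagicMC (r n : ℕ) (hr : 0 < r) (lam : Fin (r * n) → ℝ)
    (X : Matrix (Fin r) (Fin (r * n)) ℂ) : Matrix (Fin (r * n)) (Fin (r * n)) ℂ :=
  Matrix.of fun i j => (lam i : ℂ) ^ (j.val / r) * X ⟨j.val % r, Nat.mod_lt _ hr⟩ i

/-- `Δ(A)`: the Vandermonde product `∏_{i,j ∈ A, i<j} (λ_j − λ_i)`. -/
def vdm {N : ℕ} (lam : Fin N → ℝ) (A : Finset (Fin N)) : ℝ :=
  ∏ p ∈ (A ×ˢ A).filter fun p => p.1 < p.2, (lam p.2 - lam p.1)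

/-- `𝒫_{r,n}`: ordered `r`-tuples of pairwise disjoint `n`-element subsets of
`{1,…,rn}` whose union is everything. -/
def parts (r n : ℕ) : Finset (Fin r → Finset (Fin (r * n))) :=
  Finset.univ.filter fun A =>
    (∀ m, (A m).card = n) ∧ (∀ m m', m ≠ m' → Disjoint (A m) (A m')) ∧
      Finset.univ.biUnion A = Finset.univ



open scoped BigOperators Real
open MeasureTheory ProbabilityTheory

noncomputable section

/-- The standard complex gaussian building block measure on `ℝ × ℝ`. -/
def nu1 : Measure ℝ := gaussianReal 0 (1/2)

instance : IsProbabilityMeasure nu1 := by unfold nu1; infer_instance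

lemma nu1_eq : nu1 = volume.withDensity
    (fun x => ENNReal.ofReal ((Real.sqrt π)⁻¹ * Real.exp (-x^2))) := by
  unfold nu1
  rw [gaussianReal_of_var_ne_zero _ (by norm_num : (1/2 : NNReal) ≠ 0)]
  congr 1
  funext x
  unfold gaussianPDF gaussianPDFReal
  have h1 : ((1/2 : NNReal) : ℝ) = 1/2 := by norm_num
  rw [h1, show (2:ℝ) * π * (1/2) = π by ring,
    show -(x-(0:ℝ))^2/(2*(1/2:ℝ)) = -x^2 by ring]

lemma pdf_meas : Measurable (fun x : ℝ => ((Real.sqrt π)⁻¹ * Real.exp (-x^2)).toNNReal) := by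
  apply Measurable.real_toNNReal
  exact (((measurable_id.pow_const 2).neg).exp).const_mul _

lemma pdf_coe (x : ℝ) : ((((Real.sqrt π)⁻¹ * Real.exp (-x^2)).toNNReal : NNReal) : ℝ)
    = (Real.sqrt π)⁻¹ * Real.exp (-x^2) := by
  rw [Real.coe_toNNReal]
  positivity

lemma integral_nu1 (g : ℝ → ℝ) :
    ∫ x, g x ∂nu1 = ∫ x, (Real.sqrt π)⁻¹ * Real.exp (-x^2) * g x := by
  rw [nu1_eq]
  have : (fun x : ℝ => ENNReal.ofReal ((Real.sqrt π)⁻¹ * Real.exp (-x^2)))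
      = fun x => (((Real.sqrt π)⁻¹ * Real.exp (-x^2)).toNNReal : ENNReal) := rfl
  rw [this, integral_withDensity_eq_integral_smul pdf_meas]
  congr 1; funext x
  rw [NNReal.smul_def, smul_eq_mul, pdf_coe]

lemma integrable_nu1 {g : ℝ → ℝ}
    (hg : Integrable (fun x => (Real.sqrt π)⁻¹ * Real.exp (-x^2) * g x) volume)
    (hm : Measurable g) :
    Integrable g nu1 := by
  rw [nu1_eq]
  have : (fun x : ℝ => ENNReal.ofReal ((Real.sqrt π)⁻¹ * Real.exp (-x^2)))
      = fun x => (((Real.sqrt π)⁻¹ * Real.exp (-x^2)).toNNReal : ENNReal) := rfl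
  rw [this, integrable_withDensity_iff_integrable_smul pdf_meas]
  have e : (fun x => ((((Real.sqrt π)⁻¹ * Real.exp (-x^2)).toNNReal : NNReal) • g x))
      = fun x => (Real.sqrt π)⁻¹ * Real.exp (-x^2) * g x := by
    funext x; rw [NNReal.smul_def, smul_eq_mul, pdf_coe]
  rw [e]; exact hg

lemma g1 : Integrable (fun x : ℝ => x) nu1 := by
  apply integrable_nu1 ?_ measurable_id
  have := (integrable_mul_exp_neg_mul_sq (b := 1) one_pos).const_mul (Real.sqrt π)⁻¹
  convert this using 2 with x
  simp only [id_eq]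
  ring

lemma g2 : Integrable (fun x : ℝ => x^2) nu1 := by
  apply integrable_nu1 ?_ (measurable_id.pow_const 2)
  have := (integrable_rpow_mul_exp_neg_mul_sq (b := 1) one_pos (s := 2) (by norm_num)).const_mul
    (Real.sqrt π)⁻¹
  convert this using 2 with x
  rw [show (2:ℝ) = ((2:ℕ):ℝ) by norm_num, Real.rpow_natCast]
  simp only [id_eq]
  ring

lemma g1' : ∫ x, x ∂nu1 = 0 := by
  rw [integral_nu1]
  set φ : ℝ → ℝ := fun x => (Real.sqrt π)⁻¹ * Real.exp (-x^2) * x with hφ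
  have h1 : ∫ x, φ (-x) = ∫ x, φ x := integral_neg_eq_self φ volume
  have h2 : (fun x => φ (-x)) = fun x => -φ x := by
    funext x; simp only [hφ, neg_sq, mul_neg]
  rw [h2, integral_neg] at h1
  linarith

lemma gamma_32 : Real.Gamma (3/2) = Real.sqrt π / 2 := by
  rw [show (3/2 : ℝ) = 1/2 + 1 by norm_num, Real.Gamma_add_one (by norm_num),
    Real.Gamma_one_half_eq]
  ring

lemma g2' : ∫ x, x^2 ∂nu1 = 1/2 := by
  rw [integral_nu1]
  set f : ℝ → ℝ := fun t => t ^ (2:ℝ) * Real.exp (-1 * t ^ (2:ℝ)) with hf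
  have habs : ∀ x : ℝ, f |x| = x ^ 2 * Real.exp (-x^2) := by
    intro x
    rw [hf]
    show |x| ^ (2:ℝ) * Real.exp (-1 * |x| ^ (2:ℝ)) = _
    rw [show |x| ^ (2:ℝ) = |x| ^ (2:ℕ) by rw [← Real.rpow_natCast]; norm_num, sq_abs]
    ring_nf
  have heq : (fun x : ℝ => (Real.sqrt π)⁻¹ * Real.exp (-x^2) * x^2)
      = fun x => (Real.sqrt π)⁻¹ * f |x| := by
    funext x; rw [habs]; ring
  rw [heq, integral_const_mul, integral_comp_abs]
  have h2 := _root_.integral_rpow_mul_exp_neg_mul_rpow (p := 2) (q := 2) (b := 1)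
    (by norm_num) (by norm_num) one_pos
  rw [← hf] at h2
  rw [h2, show ((2:ℝ)+1)/2 = 3/2 by norm_num, gamma_32, Real.one_rpow]
  have : Real.sqrt π ≠ 0 := by positivity
  field_simp

end

noncomputable section

open ComplexConjugate

/-- product measure on ℝ × ℝ -/
def nu : Measure (ℝ × ℝ) := nu1.prod nu1

instance : IsProbabilityMeasure nu := by unfold nu; infer_instance

def zc : ℝ × ℝ → ℂ := fun p => (p.1 : ℂ) + (p.2 : ℂ) * Complex.I

lemma zc_meas : Measurable zc := by
  unfold zc
  exact (Complex.measurable_ofReal.comp measurable_fst).add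
    ((Complex.measurable_ofReal.comp measurable_snd).mul measurable_const)

lemma integrable_fst_comp {g : ℝ → ℝ} (hg : Integrable g nu1) (hm : Measurable g) :
    Integrable (fun p : ℝ × ℝ => g p.1) nu := by
  have hmap : nu.map Prod.fst = nu1 := by
    unfold nu
    rw [Measure.map_fst_prod]
    simp
  exact (integrable_map_measure (hmap ▸ hg.aestronglyMeasurable)
    measurable_fst.aemeasurable (μ := nu)).mp (by rw [hmap]; exact hg)

lemma integrable_snd_comp {g : ℝ → ℝ} (hg : Integrable g nu1) (hm : Measurable g) :
    Integrable (fun p : ℝ × ℝ => g p.2) nu := by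
  have hmap : nu.map Prod.snd = nu1 := by
    unfold nu
    rw [Measure.map_snd_prod]
    simp
  exact (integrable_map_measure (hmap ▸ hg.aestronglyMeasurable)
    measurable_snd.aemeasurable (μ := nu)).mp (by rw [hmap]; exact hg)

lemma integral_fst_comp {g : ℝ → ℝ} (hg : Integrable g nu1) (hm : Measurable g) :
    ∫ p, g p.1 ∂nu = ∫ x, g x ∂nu1 := by
  have hmap : nu.map Prod.fst = nu1 := by
    unfold nu; rw [Measure.map_fst_prod]; simp
  rw [← hmap, integral_map measurable_fst.aemeasurable (hmap ▸ hg.aestronglyMeasurable)]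

lemma integral_snd_comp {g : ℝ → ℝ} (hg : Integrable g nu1) (hm : Measurable g) :
    ∫ p, g p.2 ∂nu = ∫ x, g x ∂nu1 := by
  have hmap : nu.map Prod.snd = nu1 := by
    unfold nu; rw [Measure.map_snd_prod]; simp
  rw [← hmap, integral_map measurable_snd.aemeasurable (hmap ▸ hg.aestronglyMeasurable)]

lemma hz_int : Integrable zc nu := by
  unfold zc
  apply Integrable.add
  · exact (integrable_fst_comp g1 measurable_id).ofReal
  · exact ((integrable_snd_comp g1 measurable_id).ofReal).mul_const Complex.I

lemma conj_zc (w : ℝ × ℝ) : conj (zc w) = (w.1 : ℂ) - (w.2 : ℂ) * Complex.I := by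
  unfold zc
  simp [sub_eq_add_neg]

lemma hcz_int : Integrable (fun w => conj (zc w)) nu := by
  simp only [conj_zc]
  exact (integrable_fst_comp g1 measurable_id).ofReal.sub
    ((integrable_snd_comp g1 measurable_id).ofReal.mul_const Complex.I)

lemma int_fst_c : ∫ w : ℝ × ℝ, (w.1 : ℂ) ∂nu = 0 := by
  rw [show (∫ w : ℝ × ℝ, (w.1 : ℂ) ∂nu) = ((∫ w : ℝ × ℝ, w.1 ∂nu : ℝ) : ℂ) from integral_ofReal,
    show (∫ w : ℝ × ℝ, w.1 ∂nu) = 0 from (integral_fst_comp g1 measurable_id).trans g1']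
  simp

lemma int_snd_c : ∫ w : ℝ × ℝ, (w.2 : ℂ) ∂nu = 0 := by
  rw [show (∫ w : ℝ × ℝ, (w.2 : ℂ) ∂nu) = ((∫ w : ℝ × ℝ, w.2 ∂nu : ℝ) : ℂ) from integral_ofReal,
    show (∫ w : ℝ × ℝ, w.2 ∂nu) = 0 from (integral_snd_comp g1 measurable_id).trans g1']
  simp

lemma hz_val : ∫ w, zc w ∂nu = 0 := by
  unfold zc
  rw [show (∫ w : ℝ × ℝ, ((w.1 : ℂ) + (w.2 : ℂ) * Complex.I) ∂nu)
      = (∫ w : ℝ × ℝ, (w.1 : ℂ) ∂nu) + ∫ w : ℝ × ℝ, ((w.2 : ℂ) * Complex.I) ∂nu from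
    integral_add (integrable_fst_comp g1 measurable_id).ofReal
      ((integrable_snd_comp g1 measurable_id).ofReal.mul_const Complex.I),
    show (∫ w : ℝ × ℝ, ((w.2 : ℂ) * Complex.I) ∂nu) = (∫ w : ℝ × ℝ, (w.2 : ℂ) ∂nu) * Complex.I
      from integral_mul_const _ _, int_fst_c, int_snd_c]
  simp

lemma hcz_val : ∫ w, conj (zc w) ∂nu = 0 := by
  simp only [conj_zc]
  rw [show (∫ w : ℝ × ℝ, ((w.1 : ℂ) - (w.2 : ℂ) * Complex.I) ∂nu)
      = (∫ w : ℝ × ℝ, (w.1 : ℂ) ∂nu) - ∫ w : ℝ × ℝ, ((w.2 : ℂ) * Complex.I) ∂nu from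
    integral_sub (integrable_fst_comp g1 measurable_id).ofReal
      ((integrable_snd_comp g1 measurable_id).ofReal.mul_const Complex.I),
    show (∫ w : ℝ × ℝ, ((w.2 : ℂ) * Complex.I) ∂nu) = (∫ w : ℝ × ℝ, (w.2 : ℂ) ∂nu) * Complex.I
      from integral_mul_const _ _, int_fst_c, int_snd_c]
  simp

lemma zc_mul_conj (w : ℝ × ℝ) : zc w * conj (zc w) = ((w.1^2 + w.2^2 : ℝ) : ℂ) := by
  rw [Complex.mul_conj]
  unfold zc
  rw [Complex.normSq_add_mul_I]

lemma hzz_int : Integrable (fun w => zc w * conj (zc w)) nu := by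
  simp only [zc_mul_conj]
  apply Integrable.ofReal
  exact (integrable_fst_comp g2 (measurable_id.pow_const 2)).add
    (integrable_snd_comp g2 (measurable_id.pow_const 2))

lemma hzz_val : ∫ w, zc w * conj (zc w) ∂nu = 1 := by
  simp only [zc_mul_conj]
  rw [show (∫ w : ℝ × ℝ, ((w.1^2 + w.2^2 : ℝ) : ℂ) ∂nu)
      = ((∫ w : ℝ × ℝ, (w.1^2 + w.2^2) ∂nu : ℝ) : ℂ) from integral_ofReal,
    show (∫ w : ℝ × ℝ, (w.1^2 + w.2^2) ∂nu)
      = (∫ w : ℝ × ℝ, w.1^2 ∂nu) + ∫ w : ℝ × ℝ, w.2^2 ∂nu from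
    integral_add (integrable_fst_comp g2 (measurable_id.pow_const 2))
      (integrable_snd_comp g2 (measurable_id.pow_const 2)),
    show (∫ w : ℝ × ℝ, w.1^2 ∂nu) = 1/2 from
      (integral_fst_comp g2 (measurable_id.pow_const 2)).trans g2',
    show (∫ w : ℝ × ℝ, w.2^2 ∂nu) = 1/2 from
      (integral_snd_comp g2 (measurable_id.pow_const 2)).trans g2']
  norm_num

end

noncomputable section

open ComplexConjugate

lemma fubini_pi2 {E : Type*} [MeasurableSpace E] (m : Measure E) [SigmaFinite m]
    {I J : Type*} [Fintype I] [Fintype J] (f : I → J → E → ℂ) :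
    ∫ X : I → J → E, ∏ i, ∏ j, f i j (X i j)
        ∂(Measure.pi fun _ : I => Measure.pi fun _ : J => m)
      = ∏ i, ∏ j, ∫ x, f i j x ∂m := by
  letI : MeasureSpace E := ⟨m⟩
  have h : (Measure.pi fun _ : I => Measure.pi fun _ : J => m)
      = (volume : Measure (I → J → E)) := rfl
  rw [h]
  have h2 : (∫ X : I → J → E, ∏ i, ∏ j, f i j (X i j))
      = ∏ i, ∫ Y : J → E, ∏ j, f i j (Y j) :=
    integral_fintype_prod_eq_prod (fun i (Y : J → E) => ∏ j, f i j (Y j))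
  rw [h2]
  exact Finset.prod_congr rfl fun i _ => integral_fintype_prod_eq_prod (f i)

lemma integrable_pi2 {E : Type*} [MeasurableSpace E] (m : Measure E) [SigmaFinite m]
    {I J : Type*} [Fintype I] [Fintype J] (f : I → J → E → ℂ)
    (hf : ∀ i j, Integrable (f i j) m) :
    Integrable (fun X : I → J → E => ∏ i, ∏ j, f i j (X i j))
      (Measure.pi fun _ : I => Measure.pi fun _ : J => m) := by
  letI : MeasureSpace E := ⟨m⟩
  have h : (Measure.pi fun _ : I => Measure.pi fun _ : J => m)
      = (volume : Measure (I → J → E)) := rfl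
  rw [h]
  exact Integrable.fintype_prod (f := fun i (Y : J → E) => ∏ j, f i j (Y j))
    (fun i => Integrable.fintype_prod (fun j => hf i j))

lemma entry_integral (P Q : Prop) [Decidable P] [Decidable Q] :
    ∫ w, (if P then zc w else 1) * (if Q then conj (zc w) else 1) ∂nu
      = if (P ↔ Q) then 1 else 0 := by
  by_cases hP : P <;> by_cases hQ : Q <;>
    simp [hP, hQ, hzz_val, hz_val, hcz_val, measure_univ]

lemma entry_integrable (P Q : Prop) [Decidable P] [Decidable Q] :
    Integrable (fun w => (if P then zc w else 1) * (if Q then conj (zc w) else 1)) nu := by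
  by_cases hP : P <;> by_cases hQ : Q <;>
    simp only [hP, hQ, if_true, if_false, mul_one, one_mul]
  · exact hzz_int
  · exact hz_int
  · exact hcz_int
  · exact integrable_const 1

end

noncomputable section Main

open ComplexConjugate Equiv

variable (r n : ℕ) (hr : 0 < r) (lam : Fin (r * n) → ℝ)

/-- row index used by permutation `p` in column `a`. -/
def rowF (p : Equiv.Perm (Fin (r * n))) (a : Fin (r * n)) : Fin r :=
  ⟨(p a).val % r, Nat.mod_lt _ hr⟩

/-- the real coefficient attached to a permutation. -/
def cR (p : Equiv.Perm (Fin (r * n))) : ℝ :=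
  ((Equiv.Perm.sign p : ℤ) : ℝ) * ∏ a, lam a ^ ((p a).val / r)

lemma det_expand (X : Fin r → Fin (r * n) → ℝ × ℝ) :
    (MagicMC r n hr lam (Matrix.of fun m a => zc (X m a))).det
      = ∑ p : Equiv.Perm (Fin (r * n)),
          ((cR r n lam p : ℝ) : ℂ) * ∏ a, zc (X (rowF r n hr p a) a) := by
  rw [Matrix.det_apply']
  rw [← Equiv.sum_comp (Equiv.inv (Equiv.Perm (Fin (r * n))))
    (fun p => ((cR r n lam p : ℝ) : ℂ) * ∏ a, zc (X (rowF r n hr p a) a))]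
  refine Finset.sum_congr rfl fun σ _ => ?_
  simp only [Equiv.inv_apply]
  have h1 : ∏ i : Fin (r * n),
        (MagicMC r n hr lam (Matrix.of fun m a => zc (X m a))) (σ i) i
      = ∏ a, ((lam a : ℂ) ^ ((σ⁻¹ a).val / r) * zc (X (rowF r n hr σ⁻¹ a) a)) := by
    rw [← Equiv.prod_comp σ
      (fun a => (lam a : ℂ) ^ ((σ⁻¹ a).val / r) * zc (X (rowF r n hr σ⁻¹ a) a))]
    refine Finset.prod_congr rfl fun i _ => ?_
    simp [MagicMC, rowF, Equiv.symm_apply_apply]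
  rw [h1, Finset.prod_mul_distrib]
  unfold cR
  rw [Equiv.Perm.sign_inv]
  push_cast
  ring

end Main

noncomputable section Analytic

set_option maxHeartbeats 1000000

open ComplexConjugate Equiv

variable (r n : ℕ) (hr : 0 < r) (lam : Fin (r * n) → ℝ)

def muP : Measure (Fin r → Fin (r * n) → ℝ × ℝ) :=
  Measure.pi fun _ : Fin r => Measure.pi fun _ : Fin (r * n) => nu

lemma prod_row_ite (row : Fin (r * n) → Fin r) (g : Fin r → Fin (r * n) → ℂ) :
    (∏ m, ∏ a, (if row a = m then g m a else 1)) = ∏ a, g (row a) a := by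
  rw [Finset.prod_comm]
  refine Finset.prod_congr rfl fun a _ => ?_
  rw [Finset.prod_ite_eq]
  simp

lemma pair_integrand (p q : Equiv.Perm (Fin (r * n))) (X : Fin r → Fin (r * n) → ℝ × ℝ) :
    (∏ a, zc (X (rowF r n hr p a) a)) * conj (∏ a, zc (X (rowF r n hr q a) a))
      = ∏ m, ∏ a, ((if rowF r n hr p a = m then zc (X m a) else 1) *
          (if rowF r n hr q a = m then conj (zc (X m a)) else 1)) := by
  simp_rw [Finset.prod_mul_distrib]
  rw [prod_row_ite r n (rowF r n hr p) (fun m a => zc (X m a)),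
    prod_row_ite r n (rowF r n hr q) (fun m a => conj (zc (X m a))), map_prod]

lemma pair_integral (p q : Equiv.Perm (Fin (r * n))) :
    ∫ X, (∏ a, zc (X (rowF r n hr p a) a)) * conj (∏ a, zc (X (rowF r n hr q a) a))
        ∂(muP r n)
      = if (∀ a, rowF r n hr p a = rowF r n hr q a) then 1 else 0 := by
  simp_rw [pair_integrand r n hr p q]
  rw [show (muP r n) = Measure.pi fun _ : Fin r => Measure.pi fun _ : Fin (r * n) => nu from rfl,
    fubini_pi2 nu (fun m a w => (if rowF r n hr p a = m then zc w else 1) *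
      (if rowF r n hr q a = m then conj (zc w) else 1))]
  rw [Finset.prod_comm (γ := Fin r)]
  simp_rw [entry_integral]
  by_cases H : ∀ a, rowF r n hr p a = rowF r n hr q a
  · rw [if_pos H]
    apply Finset.prod_eq_one; intro a _
    apply Finset.prod_eq_one; intro m _
    rw [H a]; simp
  · rw [if_neg H]
    push_neg at H
    obtain ⟨a, ha⟩ := H
    apply Finset.prod_eq_zero (Finset.mem_univ a)
    apply Finset.prod_eq_zero (Finset.mem_univ (rowF r n hr p a))
    rw [if_neg]
    exact fun h => ha ((h.mp rfl).symm)

lemma pair_integrable (p q : Equiv.Perm (Fin (r * n))) :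
    Integrable (fun X => (∏ a, zc (X (rowF r n hr p a) a)) *
      conj (∏ a, zc (X (rowF r n hr q a) a))) (muP r n) := by
  simp_rw [pair_integrand r n hr p q]
  exact integrable_pi2 nu (fun m a w => (if rowF r n hr p a = m then zc w else 1) *
      (if rowF r n hr q a = m then conj (zc w) else 1))
    (fun m a => entry_integrable _ _)

/-- The value of the integral as a purely combinatorial double sum. -/
def SR : ℝ :=
  ∑ p : Equiv.Perm (Fin (r * n)), ∑ q : Equiv.Perm (Fin (r * n)),
    cR r n lam p * cR r n lam q *
      (if ∀ a, rowF r n hr p a = rowF r n hr q a then 1 else 0)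

lemma lhs_eq :
    (∫ X : Fin r → Fin (r * n) → ℝ × ℝ,
        Norm.norm ((MagicMC r n hr lam (Matrix.of fun m a => zc (X m a))).det) ^ 2
        ∂(muP r n)) = SR r n hr lam := by
  rw [← Complex.ofReal_inj]
  have step1 : ((∫ X : Fin r → Fin (r * n) → ℝ × ℝ,
      Norm.norm ((MagicMC r n hr lam (Matrix.of fun m a => zc (X m a))).det) ^ 2
      ∂(muP r n) : ℝ) : ℂ)
      = ∫ X : Fin r → Fin (r * n) → ℝ × ℝ,
          (((MagicMC r n hr lam (Matrix.of fun m a => zc (X m a))).det) *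
            conj ((MagicMC r n hr lam (Matrix.of fun m a => zc (X m a))).det)) ∂(muP r n) := by
    rw [show ((∫ X : Fin r → Fin (r * n) → ℝ × ℝ,
        Norm.norm ((MagicMC r n hr lam (Matrix.of fun m a => zc (X m a))).det) ^ 2
        ∂(muP r n) : ℝ) : ℂ)
        = ∫ X : Fin r → Fin (r * n) → ℝ × ℝ,
            ((Norm.norm ((MagicMC r n hr lam (Matrix.of fun m a => zc (X m a))).det) ^ 2 : ℝ)
              : ℂ) ∂(muP r n) from (integral_ofReal).symm]
    congr 1; funext X
    rw [Complex.mul_conj, ← Complex.normSq_eq_norm_sq]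
  rw [step1]
  have step2 : ∀ X : Fin r → Fin (r * n) → ℝ × ℝ,
      ((MagicMC r n hr lam (Matrix.of fun m a => zc (X m a))).det) *
        conj ((MagicMC r n hr lam (Matrix.of fun m a => zc (X m a))).det)
      = ∑ p : Equiv.Perm (Fin (r * n)), ∑ q : Equiv.Perm (Fin (r * n)),
          ((cR r n lam p * cR r n lam q : ℝ) : ℂ) *
            ((∏ a, zc (X (rowF r n hr p a) a)) *
              conj (∏ a, zc (X (rowF r n hr q a) a))) := by
    intro X
    rw [det_expand r n hr lam X, map_sum, Finset.sum_mul_sum]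
    refine Finset.sum_congr rfl fun p _ => Finset.sum_congr rfl fun q _ => ?_
    rw [map_mul, Complex.conj_ofReal, map_prod]
    push_cast
    ring
  simp_rw [step2]
  rw [integral_finset_sum _ (fun p _ => integrable_finset_sum _
    (fun q _ => ((pair_integrable r n hr p q).const_mul _)))]
  unfold SR
  push_cast
  refine Finset.sum_congr rfl fun p _ => ?_
  rw [integral_finset_sum _ (fun q _ => ((pair_integrable r n hr p q).const_mul _))]
  refine Finset.sum_congr rfl fun q _ => ?_
  rw [integral_const_mul, pair_integral r n hr]
  split <;> simp

end Analytic

noncomputable section Comb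

set_option maxHeartbeats 1000000

open Equiv Finset

variable (r n : ℕ) (hr : 0 < r) (lam : Fin (r * n) → ℝ)

/-- explicit equivalence `Fin r × Fin n ≃ Fin (r*n)`, `(m,k) ↦ m + r*k`. -/
def eRN : Fin r × Fin n ≃ Fin (r * n) where
  toFun x := ⟨x.1.val + r * x.2.val, by
    calc x.1.val + r * x.2.val < r + r * x.2.val := Nat.add_lt_add_right x.1.isLt _
      _ = r * (x.2.val + 1) := by ring
      _ ≤ r * n := Nat.mul_le_mul_left _ x.2.isLt⟩
  invFun j := (⟨j.val % r, Nat.mod_lt _ hr⟩,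
    ⟨j.val / r, by
      apply (Nat.div_lt_iff_lt_mul hr).mpr
      exact lt_of_lt_of_le j.isLt (Nat.mul_comm r n).le⟩)
  left_inv x := by
    ext
    · show (x.1.val + r * x.2.val) % r = x.1.val
      rw [Nat.add_mul_mod_self_left, Nat.mod_eq_of_lt x.1.isLt]
    · show (x.1.val + r * x.2.val) / r = x.2.val
      rw [Nat.add_mul_div_left _ _ hr, Nat.div_eq_of_lt x.1.isLt, Nat.zero_add]
  right_inv j := by
    ext
    show j.val % r + r * (j.val / r) = j.val
    exact Nat.mod_add_div _ _

lemma eRN_val (x : Fin r × Fin n) : (eRN r n hr x).val = x.1.val + r * x.2.val := rfl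

lemma eRN_mod (x : Fin r × Fin n) : (eRN r n hr x).val % r = x.1.val := by
  rw [eRN_val, Nat.add_mul_mod_self_left, Nat.mod_eq_of_lt x.1.isLt]

lemma eRN_div (x : Fin r × Fin n) : (eRN r n hr x).val / r = x.2.val := by
  rw [eRN_val, Nat.add_mul_div_left _ _ hr, Nat.div_eq_of_lt x.1.isLt, Nat.zero_add]

lemma rowF_eRN (p : Equiv.Perm (Fin (r * n))) (a : Fin (r * n)) (x : Fin r × Fin n)
    (h : p a = eRN r n hr x) : rowF r n hr p a = x.1 := by
  unfold rowF
  ext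
  show (p a).val % r = x.1.val
  rw [h, eRN_mod]

/-- the ordered partition associated with a permutation. -/
def pt (p : Equiv.Perm (Fin (r * n))) : Fin r → Finset (Fin (r * n)) :=
  fun m => Finset.univ.filter fun a => rowF r n hr p a = m

lemma mem_pt {p : Equiv.Perm (Fin (r * n))} {m : Fin r} {a : Fin (r * n)} :
    a ∈ pt r n hr p m ↔ rowF r n hr p a = m := by simp [pt]

lemma pt_card (p : Equiv.Perm (Fin (r * n))) (m : Fin r) : (pt r n hr p m).card = n := by
  have key : (pt r n hr p m).card = (Finset.univ : Finset (Fin n)).card := by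
    refine Finset.card_bij' (i := fun a _ => (⟨(p a).val / r, by
        apply (Nat.div_lt_iff_lt_mul hr).mpr
        exact lt_of_lt_of_le (p a).isLt (Nat.mul_comm r n).le⟩ : Fin n))
      (fun k _ => p.symm (eRN r n hr (m, k))) ?hi ?hj ?left ?right
    case hi => intro a _; exact Finset.mem_univ _
    case hj =>
      intro k _
      rw [mem_pt]
      exact rowF_eRN r n hr p _ (m, k) (p.apply_symm_apply _)
    case left =>
      intro a ha
      rw [mem_pt] at ha
      apply p.injective
      rw [p.apply_symm_apply]
      ext
      rw [eRN_val]
      show m.val + r * ((p a).val / r) = (p a).val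
      have hm : (p a).val % r = m.val := congrArg Fin.val ha
      rw [← hm]
      exact Nat.mod_add_div _ _
    case right =>
      intro k _
      ext
      show (p (p.symm (eRN r n hr (m, k)))).val / r = k.val
      rw [p.apply_symm_apply, eRN_div]
  simpa using key

lemma pt_mem_parts (p : Equiv.Perm (Fin (r * n))) : pt r n hr p ∈ parts r n := by
  rw [parts, Finset.mem_filter]
  refine ⟨Finset.mem_univ _, fun m => pt_card r n hr p m, ?_, ?_⟩
  · intro m m' hmm'
    rw [Finset.disjoint_left]
    intro a ha ha'
    rw [mem_pt] at ha ha'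
    exact hmm' (ha ▸ ha'.symm ▸ rfl)
  · apply Finset.eq_univ_of_forall
    intro a
    exact Finset.mem_biUnion.mpr ⟨rowF r n hr p a, Finset.mem_univ _, (mem_pt r n hr).mpr rfl⟩

lemma cond_iff (p q : Equiv.Perm (Fin (r * n))) :
    (∀ a, rowF r n hr p a = rowF r n hr q a) ↔ pt r n hr p = pt r n hr q := by
  constructor
  · intro h
    funext m
    ext a
    rw [mem_pt, mem_pt, h a]
  · intro h a
    have h1 : a ∈ pt r n hr p (rowF r n hr p a) := (mem_pt r n hr).mpr rfl
    rw [h] at h1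
    exact ((mem_pt r n hr).mp h1).symm

/-- sum of coefficients over the fiber of a partition. -/
def SA (A : Fin r → Finset (Fin (r * n))) : ℝ :=
  ∑ p ∈ Finset.univ.filter (fun p : Equiv.Perm (Fin (r * n)) => pt r n hr p = A), cR r n lam p

lemma SR_eq_sum_SA : SR r n hr lam = ∑ A ∈ parts r n, SA r n hr lam A ^ 2 := by
  unfold SR
  have step1 : ∀ p : Equiv.Perm (Fin (r * n)),
      (∑ q : Equiv.Perm (Fin (r * n)), cR r n lam p * cR r n lam q *
        (if ∀ a, rowF r n hr p a = rowF r n hr q a then 1 else 0))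
      = cR r n lam p * SA r n hr lam (pt r n hr p) := by
    intro p
    unfold SA
    rw [Finset.sum_filter, Finset.mul_sum]
    refine Finset.sum_congr rfl fun q _ => ?_
    by_cases h : pt r n hr q = pt r n hr p
    · rw [if_pos h, if_pos ((cond_iff r n hr p q).mpr h.symm), mul_one]
    · rw [if_neg h, if_neg (fun hc => h ((cond_iff r n hr p q).mp hc).symm), mul_zero, mul_zero]
  simp_rw [step1]
  rw [← Finset.sum_fiberwise_of_maps_to (fun p _ => pt_mem_parts r n hr p)
    (fun p => cR r n lam p * SA r n hr lam (pt r n hr p))]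
  refine Finset.sum_congr rfl fun A hA => ?_
  rw [sq]
  unfold SA
  rw [Finset.sum_mul]
  refine Finset.sum_congr rfl fun p hp => ?_
  rw [(Finset.mem_filter.mp hp).2]

end Comb

noncomputable section Comb2

set_option maxHeartbeats 1000000

open Equiv Finset

variable (r n : ℕ) (hr : 0 < r) (lam : Fin (r * n) → ℝ)
variable (A : Fin r → Finset (Fin (r * n)))

/-- monotone enumeration of the blocks. -/
def psiF (hcard : ∀ m, (A m).card = n) (m : Fin r) (k : Fin n) : Fin (r * n) :=
  (A m).orderEmbOfFin (hcard m) k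

lemma psiF_mem (hcard : ∀ m, (A m).card = n) (m : Fin r) (k : Fin n) :
    psiF r n A hcard m k ∈ A m := Finset.orderEmbOfFin_mem _ _ _

lemma psiF_inj (hcard : ∀ m, (A m).card = n) (m : Fin r) :
    Function.Injective (psiF r n A hcard m) := (Finset.orderEmbOfFin _ _).injective

lemma mem_unique (hdisj : ∀ m m', m ≠ m' → Disjoint (A m) (A m'))
    {a : Fin (r * n)} {m m' : Fin r} (h : a ∈ A m) (h' : a ∈ A m') : m = m' := by
  by_contra hne
  exact (Finset.disjoint_left.mp (hdisj m m' hne)) h h'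

def gfun (hcard : ∀ m, (A m).card = n) : Fin (r * n) → Fin (r * n) :=
  fun j => psiF r n A hcard ((eRN r n hr).symm j).1 ((eRN r n hr).symm j).2

lemma gfun_inj (hcard : ∀ m, (A m).card = n)
    (hdisj : ∀ m m', m ≠ m' → Disjoint (A m) (A m')) :
    Function.Injective (gfun r n hr A hcard) := by
  intro j j' h
  unfold gfun at h
  have hm : ((eRN r n hr).symm j).1 = ((eRN r n hr).symm j').1 :=
    mem_unique r n A hdisj (psiF_mem r n A hcard _ _)
      (by rw [h]; exact psiF_mem r n A hcard _ _)
  rw [← hm] at h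
  have hk := psiF_inj r n A hcard _ h
  apply (eRN r n hr).symm.injective
  exact Prod.ext hm hk

def gE (hcard : ∀ m, (A m).card = n)
    (hdisj : ∀ m m', m ≠ m' → Disjoint (A m) (A m')) : Equiv.Perm (Fin (r * n)) :=
  Equiv.ofBijective (gfun r n hr A hcard)
    (Finite.injective_iff_bijective.mp (gfun_inj r n hr A hcard hdisj))

lemma gE_apply (hcard : ∀ m, (A m).card = n)
    (hdisj : ∀ m m', m ≠ m' → Disjoint (A m) (A m')) (x : Fin r × Fin n) :
    gE r n hr A hcard hdisj (eRN r n hr x) = psiF r n A hcard x.1 x.2 := by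
  show gfun r n hr A hcard (eRN r n hr x) = _
  unfold gfun
  rw [Equiv.symm_apply_apply]

lemma gE_symm_psiF (hcard : ∀ m, (A m).card = n)
    (hdisj : ∀ m m', m ≠ m' → Disjoint (A m) (A m')) (x : Fin r × Fin n) :
    (gE r n hr A hcard hdisj).symm (psiF r n A hcard x.1 x.2) = eRN r n hr x := by
  rw [Equiv.symm_apply_eq, gE_apply]

include hr in
lemma psiF_surj (hcard : ∀ m, (A m).card = n)
    (hdisj : ∀ m m', m ≠ m' → Disjoint (A m) (A m')) (a : Fin (r * n)) :
    ∃ x : Fin r × Fin n, psiF r n A hcard x.1 x.2 = a := by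
  refine ⟨(eRN r n hr).symm ((gE r n hr A hcard hdisj).symm a), ?_⟩
  have := gE_apply r n hr A hcard hdisj ((eRN r n hr).symm ((gE r n hr A hcard hdisj).symm a))
  rw [Equiv.apply_symm_apply, Equiv.apply_symm_apply] at this
  exact this.symm

def PhiP (hcard : ∀ m, (A m).card = n)
    (hdisj : ∀ m m', m ≠ m' → Disjoint (A m) (A m'))
    (s : Fin r → Equiv.Perm (Fin n)) : Equiv.Perm (Fin (r * n)) :=
  (gE r n hr A hcard hdisj).symm.trans
    ((eRN r n hr).symm.trans ((Equiv.prodCongrRight s).trans (eRN r n hr)))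

lemma PhiP_apply (hcard : ∀ m, (A m).card = n)
    (hdisj : ∀ m m', m ≠ m' → Disjoint (A m) (A m'))
    (s : Fin r → Equiv.Perm (Fin n)) (x : Fin r × Fin n) :
    PhiP r n hr A hcard hdisj s (psiF r n A hcard x.1 x.2)
      = eRN r n hr (x.1, s x.1 x.2) := by
  show eRN r n hr (Equiv.prodCongrRight s ((eRN r n hr).symm
    ((gE r n hr A hcard hdisj).symm (psiF r n A hcard x.1 x.2)))) = _
  rw [gE_symm_psiF, Equiv.symm_apply_apply]
  rfl

lemma sign_PhiP (hcard : ∀ m, (A m).card = n)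
    (hdisj : ∀ m m', m ≠ m' → Disjoint (A m) (A m'))
    (s : Fin r → Equiv.Perm (Fin n)) :
    ((Equiv.Perm.sign (PhiP r n hr A hcard hdisj s) : ℤ) : ℝ)
      = ((Equiv.Perm.sign (gE r n hr A hcard hdisj) : ℤ) : ℝ)
        * ∏ m, ((Equiv.Perm.sign (s m) : ℤ) : ℝ) := by
  have h : PhiP r n hr A hcard hdisj s
      = ((eRN r n hr).permCongr (Equiv.prodCongrRight s))
        * (gE r n hr A hcard hdisj).symm := rfl
  rw [h, map_mul, Equiv.Perm.sign_permCongr, Equiv.Perm.sign_prodCongrRight]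
  have h2 : Equiv.Perm.sign (gE r n hr A hcard hdisj).symm
      = Equiv.Perm.sign (gE r n hr A hcard hdisj) := by
    rw [Equiv.Perm.sign_symm]
  rw [h2]
  push_cast [Units.val_mul]
  rw [mul_comm]

lemma pt_PhiP (hcard : ∀ m, (A m).card = n)
    (hdisj : ∀ m m', m ≠ m' → Disjoint (A m) (A m'))
    (s : Fin r → Equiv.Perm (Fin n)) :
    pt r n hr (PhiP r n hr A hcard hdisj s) = A := by
  funext m'
  ext a
  obtain ⟨x, rfl⟩ := psiF_surj r n hr A hcard hdisj a
  rw [mem_pt]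
  have hrow : rowF r n hr (PhiP r n hr A hcard hdisj s) (psiF r n A hcard x.1 x.2) = x.1 :=
    rowF_eRN r n hr _ _ (x.1, s x.1 x.2) (PhiP_apply r n hr A hcard hdisj s x)
  rw [hrow]
  constructor
  · rintro rfl
    exact psiF_mem r n A hcard _ _
  · intro h
    exact mem_unique r n A hdisj (psiF_mem r n A hcard _ _) h

lemma cR_PhiP (hcard : ∀ m, (A m).card = n)
    (hdisj : ∀ m m', m ≠ m' → Disjoint (A m) (A m'))
    (s : Fin r → Equiv.Perm (Fin n)) :
    cR r n lam (PhiP r n hr A hcard hdisj s)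
      = ((Equiv.Perm.sign (gE r n hr A hcard hdisj) : ℤ) : ℝ)
        * ∏ m, (((Equiv.Perm.sign (s m) : ℤ) : ℝ)
            * ∏ k, lam (psiF r n A hcard m k) ^ ((s m k : Fin n) : ℕ)) := by
  unfold cR
  rw [sign_PhiP r n hr A hcard hdisj s]
  have hprod : (∏ a, lam a ^ (((PhiP r n hr A hcard hdisj s) a).val / r))
      = ∏ m, ∏ k, lam (psiF r n A hcard m k) ^ ((s m k : Fin n) : ℕ) := by
    rw [← Equiv.prod_comp ((eRN r n hr).trans (gE r n hr A hcard hdisj))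
      (fun a => lam a ^ (((PhiP r n hr A hcard hdisj s) a).val / r)),
      Fintype.prod_prod_type]
    refine Finset.prod_congr rfl fun m _ => Finset.prod_congr rfl fun k _ => ?_
    have h1 : ((eRN r n hr).trans (gE r n hr A hcard hdisj)) (m, k)
        = psiF r n A hcard m k := gE_apply r n hr A hcard hdisj (m, k)
    rw [h1, PhiP_apply r n hr A hcard hdisj s (m, k), eRN_div]
  rw [hprod, Finset.prod_mul_distrib]
  ring

lemma PhiP_inj (hcard : ∀ m, (A m).card = n)
    (hdisj : ∀ m m', m ≠ m' → Disjoint (A m) (A m')) :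
    Function.Injective (PhiP r n hr A hcard hdisj) := by
  intro s s' h
  funext m
  apply Equiv.ext
  intro k
  have h1 := congrArg (fun P : Equiv.Perm (Fin (r * n)) => P (psiF r n A hcard m k)) h
  simp only [PhiP_apply r n hr A hcard hdisj _ (m, k)] at h1
  have := (eRN r n hr).injective h1
  exact (Prod.ext_iff.mp this).2

lemma PhiP_surj (hcard : ∀ m, (A m).card = n)
    (hdisj : ∀ m m', m ≠ m' → Disjoint (A m) (A m'))
    (p : Equiv.Perm (Fin (r * n))) (hp : pt r n hr p = A) :
    ∃ s, PhiP r n hr A hcard hdisj s = p := by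
  have hmod : ∀ m k, (p (psiF r n A hcard m k)).val % r = m.val := by
    intro m k
    have h1 : psiF r n A hcard m k ∈ pt r n hr p m := by
      rw [hp]; exact psiF_mem r n A hcard m k
    exact congrArg Fin.val ((mem_pt r n hr).mp h1)
  have hdiv : ∀ m k, (p (psiF r n A hcard m k)).val / r < n := by
    intro m k
    apply (Nat.div_lt_iff_lt_mul hr).mpr
    exact lt_of_lt_of_le (p _).isLt (Nat.mul_comm r n).le
  set σf : Fin r → Fin n → Fin n :=
    fun m k => ⟨(p (psiF r n A hcard m k)).val / r, hdiv m k⟩ with hσf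
  have hinj : ∀ m, Function.Injective (σf m) := by
    intro m k k' hkk'
    have hval : (p (psiF r n A hcard m k)).val = (p (psiF r n A hcard m k')).val := by
      have d : (p (psiF r n A hcard m k)).val / r = (p (psiF r n A hcard m k')).val / r :=
        congrArg Fin.val hkk'
      calc (p (psiF r n A hcard m k)).val
          = (p (psiF r n A hcard m k)).val % r + r * ((p (psiF r n A hcard m k)).val / r) :=
            (Nat.mod_add_div _ _).symm
        _ = (p (psiF r n A hcard m k')).val % r + r * ((p (psiF r n A hcard m k')).val / r) := by
            rw [hmod m k, hmod m k', d]
        _ = (p (psiF r n A hcard m k')).val := Nat.mod_add_div _ _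
    exact psiF_inj r n A hcard m (p.injective (Fin.ext hval))
  refine ⟨fun m => Equiv.ofBijective (σf m) (Finite.injective_iff_bijective.mp (hinj m)), ?_⟩
  apply Equiv.ext
  intro a
  obtain ⟨x, rfl⟩ := psiF_surj r n hr A hcard hdisj a
  rw [PhiP_apply r n hr A hcard hdisj _ x]
  ext
  rw [eRN_val]
  show x.1.val + r * ((p (psiF r n A hcard x.1 x.2)).val / r) = _
  rw [← hmod x.1 x.2]
  exact Nat.mod_add_div _ _

lemma sum_perm_vdm (v : Fin n → ℝ) :
    ∑ σ : Equiv.Perm (Fin n), ((Equiv.Perm.sign σ : ℤ) : ℝ) * ∏ k, v k ^ ((σ k : Fin n) : ℕ)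
      = ∏ i : Fin n, ∏ j ∈ Finset.Ioi i, (v j - v i) := by
  rw [← Matrix.det_vandermonde v, Matrix.det_apply']
  apply Fintype.sum_equiv (Equiv.inv (Equiv.Perm (Fin n)))
  intro σ
  simp only [Equiv.inv_apply]
  have h1 : ∏ i, Matrix.vandermonde v (σ⁻¹ i) i = ∏ k, v k ^ ((σ k : Fin n) : ℕ) := by
    rw [← Equiv.prod_comp σ (fun i => Matrix.vandermonde v (σ⁻¹ i) i)]
    refine Finset.prod_congr rfl fun k _ => ?_
    simp [Matrix.vandermonde, Equiv.symm_apply_apply]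
  rw [h1, Equiv.Perm.sign_inv]
end Comb2

noncomputable section Final

set_option maxHeartbeats 1000000

open Equiv Finset

variable (r n : ℕ) (hr : 0 < r) (lam : Fin (r * n) → ℝ)
variable (A : Fin r → Finset (Fin (r * n)))

lemma sum_prod_perm (h : Fin r → Equiv.Perm (Fin n) → ℝ) :
    ∑ s : Fin r → Equiv.Perm (Fin n), ∏ m, h m (s m)
      = ∏ m, ∑ σ : Equiv.Perm (Fin n), h m σ := by
  rw [Finset.prod_univ_sum]
  exact Finset.sum_congr Fintype.piFinset_univ.symm fun _ _ => rfl

lemma SA_eq (hcard : ∀ m, (A m).card = n)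
    (hdisj : ∀ m m', m ≠ m' → Disjoint (A m) (A m')) :
    SA r n hr lam A
      = ((Equiv.Perm.sign (gE r n hr A hcard hdisj) : ℤ) : ℝ)
        * ∏ m, ∑ σ : Equiv.Perm (Fin n),
            ((Equiv.Perm.sign σ : ℤ) : ℝ) * ∏ k, lam (psiF r n A hcard m k) ^ ((σ k : Fin n) : ℕ) := by
  unfold SA
  have hbij : ∑ s : (Fin r → Equiv.Perm (Fin n)), cR r n lam (PhiP r n hr A hcard hdisj s)
      = ∑ p ∈ Finset.univ.filter
          (fun p : Equiv.Perm (Fin (r * n)) => pt r n hr p = A), cR r n lam p := by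
    apply Finset.sum_bij (i := fun s _ => PhiP r n hr A hcard hdisj s)
    · intro s _
      exact Finset.mem_filter.mpr ⟨Finset.mem_univ _, pt_PhiP r n hr A hcard hdisj s⟩
    · intro s _ s' _ h
      exact PhiP_inj r n hr A hcard hdisj h
    · intro p hp
      obtain ⟨s, hs⟩ := PhiP_surj r n hr A hcard hdisj p (Finset.mem_filter.mp hp).2
      exact ⟨s, Finset.mem_univ _, hs⟩
    · intro s _
      rfl
  rw [← hbij]
  simp_rw [cR_PhiP r n hr lam A hcard hdisj]
  rw [← Finset.mul_sum]
  congr 1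
  exact sum_prod_perm r n (fun m σ => ((Equiv.Perm.sign σ : ℤ) : ℝ)
    * ∏ k, lam (psiF r n A hcard m k) ^ ((σ k : Fin n) : ℕ))

lemma prod_Ioi_filter {M : Type*} [CommMonoid M] (F : Fin n → Fin n → M) :
    ∏ q ∈ (Finset.univ ×ˢ Finset.univ).filter (fun q : Fin n × Fin n => q.1 < q.2), F q.1 q.2
      = ∏ i, ∏ j ∈ Finset.Ioi i, F i j := by
  rw [Finset.prod_filter, Finset.prod_product]
  refine Finset.prod_congr rfl fun i _ => ?_
  have h : Finset.Ioi i = Finset.univ.filter (fun j => i < j) := by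
    ext j; simp
  rw [h, Finset.prod_filter]

lemma vdm_eq (B : Finset (Fin (r * n))) (h : B.card = n) :
    vdm lam B = ∏ i : Fin n, ∏ j ∈ Finset.Ioi i,
      (lam (B.orderEmbOfFin h j) - lam (B.orderEmbOfFin h i)) := by
  rw [← prod_Ioi_filter]
  unfold vdm
  symm
  apply Finset.prod_bij (i := fun (q : Fin n × Fin n) _ =>
    ((B.orderEmbOfFin h q.1 : Fin (r * n)), (B.orderEmbOfFin h q.2 : Fin (r * n))))
  · intro q hq
    rw [Finset.mem_filter] at hq ⊢
    refine ⟨Finset.mem_product.mpr ⟨Finset.orderEmbOfFin_mem _ _ _,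
      Finset.orderEmbOfFin_mem _ _ _⟩, ?_⟩
    exact (OrderEmbedding.lt_iff_lt _).mpr hq.2
  · intro q _ q' _ hqq'
    have h1 := (Prod.ext_iff.mp hqq').1
    have h2 := (Prod.ext_iff.mp hqq').2
    exact Prod.ext ((B.orderEmbOfFin h).injective h1) ((B.orderEmbOfFin h).injective h2)
  · intro p hp
    rw [Finset.mem_filter, Finset.mem_product] at hp
    have h1 : p.1 ∈ Set.range (B.orderEmbOfFin h) := by
      rw [Finset.range_orderEmbOfFin]
      exact hp.1.1
    have h2 : p.2 ∈ Set.range (B.orderEmbOfFin h) := by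
      rw [Finset.range_orderEmbOfFin]
      exact hp.1.2
    obtain ⟨i, hi⟩ := h1
    obtain ⟨j, hj⟩ := h2
    refine ⟨(i, j), Finset.mem_filter.mpr ⟨Finset.mem_product.mpr
      ⟨Finset.mem_univ _, Finset.mem_univ _⟩, ?_⟩, ?_⟩
    · show i < j
      apply (OrderEmbedding.lt_iff_lt (B.orderEmbOfFin h)).mp
      rw [hi, hj]
      exact hp.2
    · show ((B.orderEmbOfFin h) i, (B.orderEmbOfFin h) j) = p
      rw [hi, hj]
  · intro q _
    rfl

lemma SA_sq (hA : A ∈ parts r n) :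
    SA r n hr lam A ^ 2 = ∏ m, vdm lam (A m) ^ 2 := by
  rw [parts, Finset.mem_filter] at hA
  obtain ⟨-, hcard, hdisj, hcov⟩ := hA
  rw [SA_eq r n hr lam A hcard hdisj, mul_pow]
  have hsgn : ((Equiv.Perm.sign (gE r n hr A hcard hdisj) : ℤ) : ℝ) ^ 2 = 1 := by
    rcases Int.units_eq_one_or (Equiv.Perm.sign (gE r n hr A hcard hdisj)) with h | h <;>
      rw [h] <;> norm_num
  rw [hsgn, one_mul, ← Finset.prod_pow]
  refine Finset.prod_congr rfl fun m _ => ?_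
  congr 1
  rw [sum_perm_vdm n (fun k => lam (psiF r n A hcard m k)), vdm_eq r n lam (A m) (hcard m)]
  rfl

lemma SR_eq_final : SR r n hr lam = ∑ A ∈ parts r n, ∏ m, vdm lam (A m) ^ 2 := by
  rw [SR_eq_sum_SA]
  exact Finset.sum_congr rfl fun A hA => SA_sq r n hr lam A hA

end Final


/-- Each entry of the random matrix is `g + i·h` with `g, h` independent real Gaussians
of mean `0` and variance `1/2`, all entries independent: the matrix of pairs `(g,h)` is
distributed according to the product over all entries of `N(0,1/2) ⊗ N(0,1/2)`. -/
theorem statement3 (r n : ℕ) (hr : 0 < r) (hn : 0 < n) (lam : Fin (r * n) → ℝ) :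
    (∫ X : Fin r → Fin (r * n) → ℝ × ℝ,
        Norm.norm
            ((MagicMC r n hr lam
                (Matrix.of fun m a => ((X m a).1 : ℂ) + ((X m a).2 : ℂ) * Complex.I)).det)
          ^ 2
        ∂(Measure.pi fun _ : Fin r => Measure.pi fun _ : Fin (r * n) =>
            (gaussianReal 0 (1/2)).prod (gaussianReal 0 (1/2)))) =
      ∑ A ∈ parts r n, ∏ j : Fin r, vdm lam (A j) ^ 2 := by
  have h1 : (∫ X : Fin r → Fin (r * n) → ℝ × ℝ,
      Norm.norm ((MagicMC r n hr lam (Matrix.of fun m a => zc (X m a))).det) ^ 2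
      ∂(muP r n)) = SR r n hr lam := lhs_eq r n hr lam
  have h2 := SR_eq_final r n hr lam
  exact h1.trans h2
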